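/- Let λ, a ∈ ℂ with a ≠ 0, 0 < |λ| < 1, λ^n ∉ ℝ for all integers n > 0, and u_m ≠ 0 for all m ∈ ℕ. Let (r_n)_{n≥0} be a sequence of positive integers such that {r_n·θ} = ‖r_n·θ‖ < 1/4 for all n, and suppose there exists ε > 0 such that for all n, all real c > 0, and all integers q with 1 ≤ q < r_n: ‖q·θ‖ < c·‖r_n·θ‖ implies q ≥ (ε/c)·r_n. For each n let Δ_n := { m ∈ ℕ : w_{n,m} ≠ 0 }. Then there exists a constant C > 0 such that for all n, any two distinct elements m < m' of Δ_n satisfy m' − m ≥ C·r_n. -/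

import Mathlib

lemma cos_ivt {y t : ℝ} (hy : Real.cos y ≠ 0) (hyt : Real.cos (y + t) ≠ 0)
    (h : ¬(0 < Real.cos y ↔ 0 < Real.cos (y + t))) :
    ∃ j : ℤ, |y - (2 * j + 1) * Real.pi / 2| ≤ |t| := by
  have h0 : (0 : ℝ) ∈ Set.uIcc (Real.cos y) (Real.cos (y + t)) := by
    rcases hy.lt_or_gt with h1 | h1 <;> rcases hyt.lt_or_gt with h2 | h2
    · exact absurd (iff_of_false (not_lt.2 h1.le) (not_lt.2 h2.le)) h
    · exact Set.mem_uIcc.2 (Or.inl ⟨h1.le, h2.le⟩)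
    · exact Set.mem_uIcc.2 (Or.inr ⟨h2.le, h1.le⟩)
    · exact absurd (iff_of_true h1 h2) h
  obtain ⟨z, hzm, hz0⟩ := intermediate_value_uIcc (Real.continuous_cos.continuousOn) h0
  obtain ⟨j, hj⟩ := Real.cos_eq_zero_iff.1 hz0
  refine ⟨j, ?_⟩
  rw [← hj]
  rcases Set.mem_uIcc.1 hzm with ⟨h1, h2⟩ | ⟨h1, h2⟩ <;> rw [abs_sub_le_iff] <;>
    exact ⟨by linarith [le_abs_self t, neg_le_abs t], by linarith [le_abs_self t, neg_le_abs t]⟩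


/-- Same setup as Statement 5, with instead a Diophantine hypothesis:
there is `ε > 0` such that for all `n`, all `c > 0` and all `1 ≤ q < r_n`,
`‖qθ‖ < c·‖r_nθ‖` implies `q ≥ (ε/c)·r_n`.  Then there is a constant `C > 0`
such that any two distinct elements `m < m'` of `Δ_n = {m : w_{n,m} ≠ 0}`
satisfy `m' − m ≥ C·r_n`. -/
theorem stmt_6 (lam a : ℂ) (θ : ℝ)
    (ha0 : a ≠ 0) (h0 : 0 < ‖lam‖) (h1 : ‖lam‖ < 1)
    (hθmem : θ ∈ Set.Ico (0 : ℝ) 1)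
    (hθ : lam = ((‖lam‖ : ℝ) : ℂ) * Complex.exp (2 * Real.pi * Complex.I * θ))
    (hreal : ∀ n : ℕ, 0 < n → lam ^ n ∉ Set.range ((↑) : ℝ → ℂ))
    (u : ℕ → ℝ) (hu : ∀ m, (u m : ℂ) = a * lam ^ m + starRingEnd ℂ (a * lam ^ m))
    (hune : ∀ m, u m ≠ 0)
    (r : ℕ → ℕ) (hrpos : ∀ n, 0 < r n)
    (hfract : ∀ n, Int.fract ((r n : ℝ) * θ) = |(r n : ℝ) * θ - round ((r n : ℝ) * θ)|)
    (hsmall : ∀ n, |(r n : ℝ) * θ - round ((r n : ℝ) * θ)| < 1 / 4)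
    (ε : ℝ) (hε : 0 < ε)
    (hdio : ∀ n : ℕ, ∀ c : ℝ, 0 < c → ∀ q : ℕ, 1 ≤ q → q < r n →
      |(q : ℝ) * θ - round ((q : ℝ) * θ)| < c * |(r n : ℝ) * θ - round ((r n : ℝ) * θ)| →
      (q : ℝ) ≥ (ε / c) * (r n : ℝ))
    (ar br : ℕ → ℝ)
    (har : ∀ n, (ar n : ℂ) = -(lam ^ (r n) + starRingEnd ℂ (lam ^ (r n))))
    (hbr : ∀ n, br n = ‖lam‖ ^ (2 * r n))
    (w : ℕ → ℕ → ℝ)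
    (hw : ∀ n m, w n m = |u (m + 2 * r n)| + ar n * |u (m + r n)| + br n * |u m|) :
    ∃ C : ℝ, 0 < C ∧ ∀ n : ℕ, ∀ m m' : ℕ, w n m ≠ 0 → w n m' ≠ 0 → m < m' →
      (m' : ℝ) - (m : ℝ) ≥ C * (r n : ℝ) := by
  classical
  set α := Complex.arg a with hαdef
  set A := ‖a‖ with hAdef
  set L := ‖lam‖ with hLdef
  have hA : 0 < A := norm_pos_iff.mpr ha0
  have hπ : 0 < Real.pi := Real.pi_pos
  -- the explicit formula for u
  have hALm : ∀ m : ℕ, a * lam ^ m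
      = ((A * L ^ m : ℝ) : ℂ) * Complex.exp (((α + 2 * Real.pi * m * θ : ℝ)) * Complex.I) := by
    intro m
    have e1 : ((α + 2 * Real.pi * m * θ : ℝ) : ℂ) * Complex.I
        = (α : ℂ) * Complex.I + (m : ℂ) * (2 * (Real.pi : ℂ) * Complex.I * (θ : ℂ)) := by
      push_cast; ring
    rw [e1, Complex.exp_add]
    conv_lhs => rw [← Complex.norm_mul_exp_arg_mul_I a, hθ]
    rw [mul_pow, ← Complex.exp_nat_mul]
    push_cast
    ring
  have hur : ∀ m : ℕ, u m = 2 * (A * L ^ m) * Real.cos (α + 2 * Real.pi * m * θ) := by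
    intro m
    have h3 : (a * lam ^ m).re = A * L ^ m * Real.cos (α + 2 * Real.pi * m * θ) := by
      rw [hALm m, Complex.re_ofReal_mul, Complex.exp_ofReal_mul_I_re]
    have h4 : u m = 2 * (a * lam ^ m).re := by
      have h2 := hu m
      rw [Complex.add_conj] at h2
      exact_mod_cast h2
    rw [h4, h3]; ring
  have hpos : ∀ m : ℕ, 0 < 2 * (A * L ^ m) := by
    intro m; have := pow_pos h0 m; positivity
  have hcosne : ∀ m : ℕ, Real.cos (α + 2 * Real.pi * m * θ) ≠ 0 := by
    intro m hc
    exact hune m (by rw [hur m, hc, mul_zero])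
  have hsigniff : ∀ m : ℕ, (0 < u m ↔ 0 < Real.cos (α + 2 * Real.pi * m * θ)) := by
    intro m
    rw [hur m]
    constructor
    · intro h
      by_contra hc
      push_neg at hc
      nlinarith [hpos m]
    · intro h
      nlinarith [hpos m]
  -- the recurrence
  have hrec : ∀ n m : ℕ, u (m + 2 * r n) + ar n * u (m + r n) + br n * u m = 0 := by
    intro n m
    have hLc : ((L : ℂ)) ^ 2 = lam * (starRingEnd ℂ) lam := by
      rw [Complex.mul_conj]; norm_cast; exact Complex.sq_norm lam
    have hbC : ((br n : ℝ) : ℂ) = lam ^ r n * ((starRingEnd ℂ) lam) ^ r n := by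
      rw [hbr]
      push_cast
      rw [show (2 * r n) = (r n) * 2 by ring, pow_mul, ← mul_pow, ← hLc, ← pow_mul]
      ring
    have key : ((u (m + 2 * r n) : ℝ) : ℂ) + (ar n : ℝ) * (u (m + r n) : ℝ) + (br n : ℝ) * (u m : ℝ) = 0 := by
      rw [hu, hu, hu, har, hbC]
      simp only [map_mul, map_pow]
      ring
    exact_mod_cast key
  -- same signs imply w = 0
  have hsame : ∀ n m : ℕ, (0 < u m ↔ 0 < u (m + r n)) → (0 < u (m + r n) ↔ 0 < u (m + 2 * r n)) →
      w n m = 0 := by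
    intro n m h1 h2
    have hr := hrec n m
    rw [hw]
    rcases (hune m).lt_or_gt with hm | hm
    · have hm1 : u (m + r n) < 0 := by
        rcases (hune (m + r n)).lt_or_gt with h | h
        · exact h
        · exact absurd (h1.mpr h) (not_lt.2 hm.le)
      have hm2 : u (m + 2 * r n) < 0 := by
        rcases (hune (m + 2 * r n)).lt_or_gt with h | h
        · exact h
        · exact absurd (h2.mpr h) (not_lt.2 hm1.le)
      rw [abs_of_neg hm, abs_of_neg hm1, abs_of_neg hm2]; linarith
    · have hm1 : 0 < u (m + r n) := h1.mp hm
      have hm2 : 0 < u (m + 2 * r n) := h2.mp hm1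
      rw [abs_of_pos hm, abs_of_pos hm1, abs_of_pos hm2]; linarith
  have hchange : ∀ n m : ℕ, w n m ≠ 0 →
      (¬(0 < u m ↔ 0 < u (m + r n))) ∨ (¬(0 < u (m + r n) ↔ 0 < u (m + 2 * r n))) := by
    intro n m hwne
    by_contra hc
    rw [not_or, not_not, not_not] at hc
    exact hwne (hsame n m hc.1 hc.2)
  -- positivity of ‖r_n θ‖
  have hδpos : ∀ n : ℕ, 0 < |(r n : ℝ) * θ - round ((r n : ℝ) * θ)| := by
    intro n
    rcases (abs_nonneg ((r n : ℝ) * θ - round ((r n : ℝ) * θ))).lt_or_eq with h | h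
    · exact h
    · exfalso
      have hc : (r n : ℝ) * θ = ((round ((r n : ℝ) * θ) : ℤ) : ℝ) :=
        sub_eq_zero.mp (abs_eq_zero.mp h.symm)
      apply hreal (r n) (hrpos n)
      refine ⟨L ^ r n, ?_⟩
      have h2 : ((r n : ℕ) : ℂ) * (θ : ℂ) = ((round ((r n : ℝ) * θ) : ℤ) : ℂ) := by
        exact_mod_cast congrArg (fun x : ℝ => (x : ℂ)) hc
      have hcC : ((r n : ℕ) : ℂ) * (2 * (Real.pi : ℂ) * Complex.I * (θ : ℂ))
          = ((round ((r n : ℝ) * θ) : ℤ) : ℂ) * (2 * (Real.pi : ℂ) * Complex.I) := by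
        linear_combination (2 * (Real.pi : ℂ) * Complex.I) * h2
      rw [hθ, mul_pow, ← Complex.exp_nat_mul]
      push_cast
      rw [hcC, Complex.exp_int_mul_two_pi_mul_I, mul_one]
  -- sign change over a step of r n forces 2kθ + β close to an integer
  set β : ℝ := α / Real.pi - 1 / 2 with hβdef
  have hnear : ∀ n k : ℕ, ¬(0 < u k ↔ 0 < u (k + r n)) →
      ∃ j : ℤ, |2 * (k : ℝ) * θ + β - j| ≤ 2 * |(r n : ℝ) * θ - round ((r n : ℝ) * θ)| := by
    intro n k hk
    set R : ℤ := round ((r n : ℝ) * θ) with hRdef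
    set t : ℝ := 2 * Real.pi * ((r n : ℝ) * θ - R) with htdef
    have hcoseq : Real.cos (α + 2 * Real.pi * ((k + r n : ℕ) : ℝ) * θ)
        = Real.cos ((α + 2 * Real.pi * (k : ℝ) * θ) + t) := by
      have he : (α + 2 * Real.pi * ((k + r n : ℕ) : ℝ) * θ)
          = ((α + 2 * Real.pi * (k : ℝ) * θ) + t) + R * (2 * Real.pi) := by
        push_cast [htdef]; ring
      rw [he, Real.cos_add_int_mul_two_pi]
    have hiff : ¬(0 < Real.cos (α + 2 * Real.pi * (k : ℝ) * θ)
        ↔ 0 < Real.cos ((α + 2 * Real.pi * (k : ℝ) * θ) + t)) := by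
      rw [← hcoseq]
      intro hcon
      exact hk (((hsigniff k).trans hcon).trans (hsigniff (k + r n)).symm)
    have hytne : Real.cos ((α + 2 * Real.pi * (k : ℝ) * θ) + t) ≠ 0 := by
      rw [← hcoseq]; exact hcosne (k + r n)
    obtain ⟨j, hj⟩ := cos_ivt (hcosne k) hytne hiff
    refine ⟨j, ?_⟩
    have he2 : 2 * (k : ℝ) * θ + β - j
        = ((α + 2 * Real.pi * (k : ℝ) * θ) - (2 * j + 1) * Real.pi / 2) / Real.pi := by
      rw [hβdef]; field_simp; ring
    have ht2 : |t| = 2 * Real.pi * |(r n : ℝ) * θ - R| := by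
      rw [htdef, abs_mul, abs_of_pos (by positivity : (0 : ℝ) < 2 * Real.pi)]
    rw [he2, abs_div, abs_of_pos hπ, div_le_iff₀ hπ]
    rw [ht2] at hj
    linarith
  -- the constant
  refine ⟨min (1 / 2) (ε / 14), by positivity, ?_⟩
  intro n m m' hwm hwm' hlt
  set δ : ℝ := |(r n : ℝ) * θ - round ((r n : ℝ) * θ)| with hδdef
  have hδ : 0 < δ := hδpos n
  have hrn : (0 : ℝ) < (r n : ℝ) := by exact_mod_cast hrpos n
  have hCle : min (1 / 2) (ε / 14) ≤ 1 / 2 := min_le_left _ _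
  have hCpos : (0 : ℝ) < min (1 / 2) (ε / 14) := by positivity
  by_cases hbig : (r n : ℝ) ≤ (m' : ℝ) - (m : ℝ)
  · have hm12 : min (1 / 2) (ε / 14) * (r n : ℝ) ≤ 1 / 2 * (r n : ℝ) :=
      mul_le_mul_of_nonneg_right hCle hrn.le
    linarith
  push_neg at hbig
  -- extract near-integer data for m and m'
  obtain ⟨k, hk, j, hj⟩ : ∃ k : ℕ, ((k : ℝ) = m ∨ (k : ℝ) = m + r n) ∧
      ∃ j : ℤ, |2 * (k : ℝ) * θ + β - j| ≤ 2 * δ := by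
    rcases hchange n m hwm with h | h
    · exact ⟨m, Or.inl rfl, hnear n m h⟩
    · refine ⟨m + r n, Or.inr (by push_cast; ring), hnear n (m + r n) ?_⟩
      have he : m + r n + r n = m + 2 * r n := by ring
      rw [he]; exact h
  obtain ⟨k', hk', j', hj'⟩ : ∃ k' : ℕ, ((k' : ℝ) = m' ∨ (k' : ℝ) = m' + r n) ∧
      ∃ j' : ℤ, |2 * (k' : ℝ) * θ + β - j'| ≤ 2 * δ := by
    rcases hchange n m' hwm' with h | h
    · exact ⟨m', Or.inl rfl, hnear n m' h⟩
    · refine ⟨m' + r n, Or.inr (by push_cast; ring), hnear n (m' + r n) ?_⟩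
      have he : m' + r n + r n = m' + 2 * r n := by ring
      rw [he]; exact h
  have hsub : |2 * ((k' : ℝ) - k) * θ - ((j' : ℝ) - j)| ≤ 4 * δ := by
    have h1 : 2 * ((k' : ℝ) - k) * θ - ((j' : ℝ) - j)
        = (2 * (k' : ℝ) * θ + β - j') - (2 * (k : ℝ) * θ + β - j) := by ring
    rw [h1]
    calc |(2 * (k' : ℝ) * θ + β - j') - (2 * (k : ℝ) * θ + β - j)|
        ≤ |2 * (k' : ℝ) * θ + β - j'| + |2 * (k : ℝ) * θ + β - j| := abs_sub _ _
      _ ≤ 2 * δ + 2 * δ := add_le_add hj' hj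
      _ = 4 * δ := by ring
  obtain ⟨s, hs1, hs2⟩ : ∃ s : ℤ, |(s : ℝ)| ≤ 1 ∧
      (k' : ℝ) - k = ((m' : ℝ) - m) + (s : ℝ) * (r n : ℝ) := by
    rcases hk with h | h <;> rcases hk' with h' | h'
    · exact ⟨0, by norm_num, by rw [h, h']; push_cast; ring⟩
    · exact ⟨1, by norm_num, by rw [h, h']; push_cast; ring⟩
    · exact ⟨-1, by norm_num, by rw [h, h']; push_cast; ring⟩
    · exact ⟨0, by norm_num, by rw [h, h']; push_cast; ring⟩
  set R : ℤ := round ((r n : ℝ) * θ) with hRdef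
  have hEb : |2 * ((m' : ℝ) - m) * θ - (((j' - j - 2 * s * R : ℤ) : ℝ))| ≤ 6 * δ := by
    have h1 : 2 * ((m' : ℝ) - m) * θ - (((j' - j - 2 * s * R : ℤ) : ℝ))
        = (2 * ((k' : ℝ) - k) * θ - ((j' : ℝ) - j)) - (2 * (s : ℝ) * ((r n : ℝ) * θ - R)) := by
      push_cast
      linear_combination (-2 * θ) * hs2
    rw [h1]
    have h2 : |2 * (s : ℝ) * ((r n : ℝ) * θ - R)| ≤ 2 * δ := by
      rw [show 2 * (s : ℝ) * ((r n : ℝ) * θ - R) = (2 * (s : ℝ)) * ((r n : ℝ) * θ - R) by ring,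
        abs_mul, abs_mul]
      rw [hδdef, hRdef]
      have : |(2 : ℝ)| * |(s : ℝ)| ≤ 2 := by rw [abs_two]; nlinarith [abs_nonneg (s : ℝ)]
      nlinarith [abs_nonneg ((r n : ℝ) * θ - (round ((r n : ℝ) * θ) : ℤ))]
    calc |(2 * ((k' : ℝ) - k) * θ - ((j' : ℝ) - j)) - (2 * (s : ℝ) * ((r n : ℝ) * θ - R))|
        ≤ |2 * ((k' : ℝ) - k) * θ - ((j' : ℝ) - j)| + |2 * (s : ℝ) * ((r n : ℝ) * θ - R)| :=
          abs_sub _ _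
      _ ≤ 4 * δ + 2 * δ := add_le_add hsub h2
      _ = 6 * δ := by ring
  -- the gap d = m' - m
  set d : ℕ := m' - m with hddef
  have hd1 : 1 ≤ d := by omega
  have hdR : (d : ℝ) = (m' : ℝ) - m := by
    rw [hddef]; push_cast [Nat.cast_sub hlt.le]; ring
  by_cases h2d : 2 * d < r n
  · -- use the Diophantine hypothesis with q = 2d, c = 7
    have hq : |((2 * d : ℕ) : ℝ) * θ - round (((2 * d : ℕ) : ℝ) * θ)| ≤ 6 * δ := by
      have h1 := round_le (((2 * d : ℕ) : ℝ) * θ) (j' - j - 2 * s * R)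
      refine h1.trans ?_
      have h2 : ((2 * d : ℕ) : ℝ) * θ = 2 * ((m' : ℝ) - m) * θ := by
        push_cast [hdR]; ring
      rw [h2]
      exact hEb
    have h7 := hdio n 7 (by norm_num) (2 * d) (by omega) h2d (by rw [← hδdef]; linarith)
    have h7' : ((2 * d : ℕ) : ℝ) ≥ ε / 7 * (r n : ℝ) := h7
    have hd2 : ((2 * d : ℕ) : ℝ) = 2 * ((m' : ℝ) - m) := by push_cast [hdR]; ring
    rw [hd2] at h7'
    have hm14 : min (1 / 2) (ε / 14) * (r n : ℝ) ≤ ε / 14 * (r n : ℝ) :=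
      mul_le_mul_of_nonneg_right (min_le_right _ _) hrn.le
    linarith
  · -- 2d ≥ r n, so the gap is at least r n / 2
    push_neg at h2d
    have : (r n : ℝ) ≤ 2 * (d : ℝ) := by exact_mod_cast h2d
    rw [hdR] at this
    have hm12 : min (1 / 2) (ε / 14) * (r n : ℝ) ≤ 1 / 2 * (r n : ℝ) :=
      mul_le_mul_of_nonneg_right hCle hrn.le
    linarith
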